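/- For every simple 𝔤₀-supermodule V, the simple 𝔤-supermodule L(V) is not isomorphic to its parity shift Π L(V). -/

import Mathlib

noncomputable section

open Module Function

/-- A complex Lie superalgebra `𝔤 = 𝔤₀̄ ⊕ 𝔤₁̄` equipped with a compatible `ℤ`-grading
`𝔤 = 𝔤₋₁ ⊕ 𝔤₀ ⊕ 𝔤₁`, i.e. `𝔤₀ = 𝔤₀̄`, `𝔤₁̄ = 𝔤₁ ⊕ 𝔤₋₁`, the pieces `𝔤±₁` are
`𝔤₀̄`-submodules and `[𝔤₁,𝔤₁] = [𝔤₋₁,𝔤₋₁] = 0`.  The super skew-symmetry and the super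
Jacobi identity are imposed on (parity-)homogeneous elements, as usual. -/
structure GLSA where
  carrier : Type
  [isACG : AddCommGroup carrier]
  [isMod : Module ℂ carrier]
  bracket : carrier →ₗ[ℂ] carrier →ₗ[ℂ] carrier
  gneg : Submodule ℂ carrier
  g0 : Submodule ℂ carrier
  gpos : Submodule ℂ carrier
  oddCompl : IsCompl g0 (gneg ⊔ gpos)
  disjNP : Disjoint gneg gpos
  br_00 : ∀ x ∈ g0, ∀ y ∈ g0, bracket x y ∈ g0
  br_0p : ∀ x ∈ g0, ∀ y ∈ gpos, bracket x y ∈ gpos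
  br_0n : ∀ x ∈ g0, ∀ y ∈ gneg, bracket x y ∈ gneg
  br_pn : ∀ x ∈ gpos, ∀ y ∈ gneg, bracket x y ∈ g0
  br_pp : ∀ x ∈ gpos, ∀ y ∈ gpos, bracket x y = 0
  br_nn : ∀ x ∈ gneg, ∀ y ∈ gneg, bracket x y = 0
  skew_e : ∀ x ∈ g0, ∀ y, bracket x y = - bracket y x
  skew_oo : ∀ x ∈ gneg ⊔ gpos, ∀ y ∈ gneg ⊔ gpos, bracket x y = bracket y x
  jacobi_e : ∀ x y z : carrier, (x ∈ g0 ∨ y ∈ g0) →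
    bracket x (bracket y z) = bracket (bracket x y) z + bracket y (bracket x z)
  jacobi_oo : ∀ x ∈ gneg ⊔ gpos, ∀ y ∈ gneg ⊔ gpos, ∀ z,
    bracket x (bracket y z) = bracket (bracket x y) z - bracket y (bracket x z)

attribute [instance] GLSA.isACG GLSA.isMod

/-- The odd part `𝔤₁̄ = 𝔤₋₁ ⊕ 𝔤₁` of `L`. -/
def GLSA.odd (L : GLSA) : Submodule ℂ L.carrier := L.gneg ⊔ L.gpos

/-- A `𝔤`-supermodule: a `ℤ₂`-graded complex vector space with a compatible action of the
Lie superalgebra `L` (signs in the compatibility with the bracket are imposed on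
homogeneous elements). -/
structure SMod (L : GLSA) where
  carrier : Type
  [isACG : AddCommGroup carrier]
  [isMod : Module ℂ carrier]
  act : L.carrier →ₗ[ℂ] carrier →ₗ[ℂ] carrier
  ev : Submodule ℂ carrier
  od : Submodule ℂ carrier
  grading : IsCompl ev od
  act_e_ev : ∀ x ∈ L.g0, ∀ m ∈ ev, act x m ∈ ev
  act_e_od : ∀ x ∈ L.g0, ∀ m ∈ od, act x m ∈ od
  act_o_ev : ∀ x ∈ L.odd, ∀ m ∈ ev, act x m ∈ od
  act_o_od : ∀ x ∈ L.odd, ∀ m ∈ od, act x m ∈ ev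
  act_br_e : ∀ x y : L.carrier, (x ∈ L.g0 ∨ y ∈ L.g0) → ∀ m,
    act (L.bracket x y) m = act x (act y m) - act y (act x m)
  act_br_oo : ∀ x ∈ L.odd, ∀ y ∈ L.odd, ∀ m,
    act (L.bracket x y) m = act x (act y m) + act y (act x m)

attribute [instance] SMod.isACG SMod.isMod

/-- A `𝔤₀̄`-supermodule: a `ℤ₂`-graded complex vector space with an action of the (purely
even) Lie algebra `𝔤₀̄ = 𝔤₀` preserving the grading. -/
structure SMod0 (L : GLSA) where
  carrier : Type
  [isACG : AddCommGroup carrier]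
  [isMod : Module ℂ carrier]
  act : ↥L.g0 →ₗ[ℂ] carrier →ₗ[ℂ] carrier
  ev : Submodule ℂ carrier
  od : Submodule ℂ carrier
  grading : IsCompl ev od
  act_ev : ∀ (x : L.g0), ∀ m ∈ ev, act x m ∈ ev
  act_od : ∀ (x : L.g0), ∀ m ∈ od, act x m ∈ od
  act_br : ∀ (x y : L.g0) (m : carrier),
    act ⟨L.bracket ↑x ↑y, L.br_00 ↑x x.2 ↑y y.2⟩ m = act x (act y m) - act y (act x m)

attribute [instance] SMod0.isACG SMod0.isMod

/-- A homomorphism of `𝔤`-supermodules (homogeneous of degree zero). -/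
structure SHom {L : GLSA} (M N : SMod L) where
  toLin : M.carrier →ₗ[ℂ] N.carrier
  map_ev : ∀ m ∈ M.ev, toLin m ∈ N.ev
  map_od : ∀ m ∈ M.od, toLin m ∈ N.od
  equivar : ∀ (x : L.carrier) (m : M.carrier), toLin (M.act x m) = N.act x (toLin m)

/-- Isomorphism of `𝔤`-supermodules. -/
def SIso {L : GLSA} (M N : SMod L) : Prop := ∃ f : SHom M N, Bijective f.toLin

/-- Isomorphism of `𝔤₀̄`-supermodules. -/
def SIso0 {L : GLSA} (V W : SMod0 L) : Prop :=
  ∃ e : V.carrier ≃ₗ[ℂ] W.carrier,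
    (∀ v ∈ V.ev, e v ∈ W.ev) ∧ (∀ v ∈ V.od, e v ∈ W.od) ∧
    (∀ (x : L.g0) (v : V.carrier), e (V.act x v) = W.act x (e v))

/-- Isomorphism of `𝔤`-supermodules up to parity change. -/
def SIsoUpToParity {L : GLSA} (M N : SMod L) : Prop :=
  ∃ e : M.carrier ≃ₗ[ℂ] N.carrier,
    (∀ (x : L.carrier) (m : M.carrier), e (M.act x m) = N.act x (e m)) ∧
    (((∀ m ∈ M.ev, e m ∈ N.ev) ∧ (∀ m ∈ M.od, e m ∈ N.od)) ∨
     ((∀ m ∈ M.ev, e m ∈ N.od) ∧ (∀ m ∈ M.od, e m ∈ N.ev)))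

namespace SMod

variable {L : GLSA}

/-- A (graded) sub-supermodule of a `𝔤`-supermodule. -/
def IsSubmod (M : SMod L) (N : Submodule ℂ M.carrier) : Prop :=
  (∀ (x : L.carrier), ∀ m ∈ N, M.act x m ∈ N) ∧ N ≤ (N ⊓ M.ev) ⊔ (N ⊓ M.od)

/-- A simple sub-supermodule. -/
def IsSimpleSub (M : SMod L) (N : Submodule ℂ M.carrier) : Prop :=
  M.IsSubmod N ∧ N ≠ ⊥ ∧ ∀ N', M.IsSubmod N' → N' ≤ N → N' = ⊥ ∨ N' = N

/-- The socle: the sum of all simple sub-supermodules. -/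
def socle (M : SMod L) : Submodule ℂ M.carrier := sSup {N | M.IsSimpleSub N}

/-- The sub-supermodule generated by a subspace, i.e. `U(𝔤)·S`. -/
def gen (M : SMod L) (S : Submodule ℂ M.carrier) : Submodule ℂ M.carrier :=
  sInf {N | M.IsSubmod N ∧ S ≤ N}

/-- Simplicity of a `𝔤`-supermodule. -/
def IsSimple (M : SMod L) : Prop :=
  (⊤ : Submodule ℂ M.carrier) ≠ ⊥ ∧ ∀ N, M.IsSubmod N → N = ⊥ ∨ N = ⊤

/-- Indecomposability of a `𝔤`-supermodule. -/
def Indecomposable (M : SMod L) : Prop :=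
  (⊤ : Submodule ℂ M.carrier) ≠ ⊥ ∧
  ∀ N₁ N₂, M.IsSubmod N₁ → M.IsSubmod N₂ → N₁ ⊓ N₂ = ⊥ → N₁ ⊔ N₂ = ⊤ →
    N₁ = ⊥ ∨ N₂ = ⊥

/-- The parity change functor `Π`. -/
def pshift (M : SMod L) : SMod L where
  carrier := M.carrier
  act := M.act
  ev := M.od
  od := M.ev
  grading := M.grading.symm
  act_e_ev := M.act_e_od
  act_e_od := M.act_e_ev
  act_o_ev := M.act_o_od
  act_o_od := M.act_o_ev
  act_br_e := M.act_br_e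
  act_br_oo := M.act_br_oo

/-- The space `M^{𝔤₁}` of `𝔤₁`-invariants. -/
def invPos (M : SMod L) : Submodule ℂ M.carrier where
  carrier := {m | ∀ x ∈ L.gpos, M.act x m = 0}
  add_mem' := by
    intro a b ha hb x hx
    rw [map_add, ha x hx, hb x hx, add_zero]
  zero_mem' := by intro x hx; simp
  smul_mem' := by
    intro c a ha x hx
    rw [map_smul, ha x hx, smul_zero]

/-- The space `M^{𝔤₋₁}` of `𝔤₋₁`-invariants. -/
def invNeg (M : SMod L) : Submodule ℂ M.carrier where
  carrier := {m | ∀ x ∈ L.gneg, M.act x m = 0}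
  add_mem' := by
    intro a b ha hb x hx
    rw [map_add, ha x hx, hb x hx, add_zero]
  zero_mem' := by intro x hx; simp
  smul_mem' := by
    intro c a ha x hx
    rw [map_smul, ha x hx, smul_zero]

/-- Iterated action of a list of elements of `𝔤`. -/
def actList (M : SMod L) : List L.carrier → M.carrier → M.carrier
  | [], m => m
  | x :: xs, m => M.act x (M.actList xs m)

end SMod

namespace SMod0

variable {L : GLSA}

/-- A (graded) sub-supermodule of a `𝔤₀̄`-supermodule. -/
def IsSubmod (V : SMod0 L) (N : Submodule ℂ V.carrier) : Prop :=
  (∀ (x : L.g0), ∀ v ∈ N, V.act x v ∈ N) ∧ N ≤ (N ⊓ V.ev) ⊔ (N ⊓ V.od)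

/-- Simplicity of a `𝔤₀̄`-supermodule. -/
def IsSimple (V : SMod0 L) : Prop :=
  (⊤ : Submodule ℂ V.carrier) ≠ ⊥ ∧ ∀ N, V.IsSubmod N → N = ⊥ ∨ N = ⊤

end SMod0

/-- `IsKac V K η` expresses that `K`, together with the (even, `𝔤₀̄`-equivariant) unit map
`η : V → K` whose image is annihilated by `𝔤₁`, is *the* Kac module
`K(V) = Ind_{𝔤≥0}^{𝔤} V` of the `𝔤₀̄`-supermodule `V` (on which `𝔤₁` acts by zero), i.e.
satisfies the universal property `Hom_𝔤(K(V), M) = Hom_{𝔤₀̄}(V, M^{𝔤₁})`. -/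
structure IsKac {L : GLSA} (V : SMod0 L) (K : SMod L) (η : V.carrier →ₗ[ℂ] K.carrier) : Prop where
  map_ev : ∀ v ∈ V.ev, η v ∈ K.ev
  map_od : ∀ v ∈ V.od, η v ∈ K.od
  equivar : ∀ (x : L.g0) (v : V.carrier), η (V.act x v) = K.act ↑x (η v)
  pos_zero : ∀ x ∈ L.gpos, ∀ v : V.carrier, K.act x (η v) = 0
  injective : Injective η
  generates : K.gen (LinearMap.range η) = ⊤
  universal : ∀ (M : SMod L) (φ : V.carrier →ₗ[ℂ] M.carrier),
    (∀ v ∈ V.ev, φ v ∈ M.ev) → (∀ v ∈ V.od, φ v ∈ M.od) →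
    (∀ (x : L.g0) (v : V.carrier), φ (V.act x v) = M.act ↑x (φ v)) →
    (∀ x ∈ L.gpos, ∀ v : V.carrier, M.act x (φ v) = 0) →
    ∃! Φ : SHom K M, ∀ v, Φ.toLin (η v) = φ v

/-- The opposite Kac module `K'(V) = Ind_{𝔤≤0}^{𝔤} V` (with `𝔤₋₁` acting by zero on `V`),
described by its universal property. -/
structure IsKac' {L : GLSA} (V : SMod0 L) (K : SMod L) (η : V.carrier →ₗ[ℂ] K.carrier) : Prop where
  map_ev : ∀ v ∈ V.ev, η v ∈ K.ev
  map_od : ∀ v ∈ V.od, η v ∈ K.od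
  equivar : ∀ (x : L.g0) (v : V.carrier), η (V.act x v) = K.act ↑x (η v)
  neg_zero : ∀ x ∈ L.gneg, ∀ v : V.carrier, K.act x (η v) = 0
  injective : Injective η
  generates : K.gen (LinearMap.range η) = ⊤
  universal : ∀ (M : SMod L) (φ : V.carrier →ₗ[ℂ] M.carrier),
    (∀ v ∈ V.ev, φ v ∈ M.ev) → (∀ v ∈ V.od, φ v ∈ M.od) →
    (∀ (x : L.g0) (v : V.carrier), φ (V.act x v) = M.act ↑x (φ v)) →
    (∀ x ∈ L.gneg, ∀ v : V.carrier, M.act x (φ v) = 0) →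
    ∃! Φ : SHom K M, ∀ v, Φ.toLin (η v) = φ v

/-- `IsCoindPos W C ε` expresses that `C`, together with the (even, `𝔤₀̄`-equivariant)
counit `ε : C → W` killing `𝔤₁·C`, is the coinduced module `Coind_{𝔤≥0}^{𝔤}(W)` of the
`𝔤₀̄`-supermodule `W` (with `𝔤₁` acting by zero), i.e. satisfies the universal property
`Hom_𝔤(M, Coind(W)) = Hom_{𝔤≥0}(Res M, W)`. -/
structure IsCoindPos {L : GLSA} (W : SMod0 L) (C : SMod L) (ε : C.carrier →ₗ[ℂ] W.carrier) : Prop where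
  map_ev : ∀ c ∈ C.ev, ε c ∈ W.ev
  map_od : ∀ c ∈ C.od, ε c ∈ W.od
  equivar : ∀ (x : L.g0) (c : C.carrier), ε (C.act ↑x c) = W.act x (ε c)
  pos_zero : ∀ x ∈ L.gpos, ∀ c : C.carrier, ε (C.act x c) = 0
  universal : ∀ (M : SMod L) (ψ : M.carrier →ₗ[ℂ] W.carrier),
    (∀ m ∈ M.ev, ψ m ∈ W.ev) → (∀ m ∈ M.od, ψ m ∈ W.od) →
    (∀ (x : L.g0) (m : M.carrier), ψ (M.act ↑x m) = W.act x (ψ m)) →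
    (∀ x ∈ L.gpos, ∀ m : M.carrier, ψ (M.act x m) = 0) →
    ∃! Φ : SHom M C, ∀ m, ε (Φ.toLin m) = ψ m

/-- `Coind_{𝔤≤0}^{𝔤}(W)`, by its universal property. -/
structure IsCoindNeg {L : GLSA} (W : SMod0 L) (C : SMod L) (ε : C.carrier →ₗ[ℂ] W.carrier) : Prop where
  map_ev : ∀ c ∈ C.ev, ε c ∈ W.ev
  map_od : ∀ c ∈ C.od, ε c ∈ W.od
  equivar : ∀ (x : L.g0) (c : C.carrier), ε (C.act ↑x c) = W.act x (ε c)
  neg_zero : ∀ x ∈ L.gneg, ∀ c : C.carrier, ε (C.act x c) = 0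
  universal : ∀ (M : SMod L) (ψ : M.carrier →ₗ[ℂ] W.carrier),
    (∀ m ∈ M.ev, ψ m ∈ W.ev) → (∀ m ∈ M.od, ψ m ∈ W.od) →
    (∀ (x : L.g0) (m : M.carrier), ψ (M.act ↑x m) = W.act x (ψ m)) →
    (∀ x ∈ L.gneg, ∀ m : M.carrier, ψ (M.act x m) = 0) →
    ∃! Φ : SHom M C, ∀ m, ε (Φ.toLin m) = ψ m

/-- The subspace `Λ^max(𝔤₋₁) ⊗ V ⊆ K(V)`: the span of all elements obtained by acting on
`η(V)` with `dim 𝔤₋₁` many elements of `𝔤₋₁`. -/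
def botPartNeg {L : GLSA} (V : SMod0 L) (K : SMod L) (η : V.carrier →ₗ[ℂ] K.carrier) :
    Submodule ℂ K.carrier :=
  Submodule.span ℂ {m | ∃ (xs : List L.carrier) (v : V.carrier),
    xs.length = finrank ℂ ↥L.gneg ∧ (∀ x ∈ xs, x ∈ L.gneg) ∧ m = K.actList xs (η v)}

/-- The subspace `Λ^max(𝔤₁) ⊗ V ⊆ K'(V)`. -/
def botPartPos {L : GLSA} (V : SMod0 L) (K : SMod L) (η : V.carrier →ₗ[ℂ] K.carrier) :
    Submodule ℂ K.carrier :=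
  Submodule.span ℂ {m | ∃ (xs : List L.carrier) (v : V.carrier),
    xs.length = finrank ℂ ↥L.gpos ∧ (∀ x ∈ xs, x ∈ L.gpos) ∧ m = K.actList xs (η v)}

/-- For `x ∈ 𝔤₀̄`, the operator `ad x` restricted to `𝔤₁`. -/
def adPos (L : GLSA) (x : L.g0) : ↥L.gpos →ₗ[ℂ] ↥L.gpos :=
  (L.bracket ↑x).restrict (fun y hy => L.br_0p ↑x x.2 y hy)

/-- For `x ∈ 𝔤₀̄`, the operator `ad x` restricted to `𝔤₋₁`. -/
def adNeg (L : GLSA) (x : L.g0) : ↥L.gneg →ₗ[ℂ] ↥L.gneg :=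
  (L.bracket ↑x).restrict (fun y hy => L.br_0n ↑x x.2 y hy)

/-- The character by which `𝔤₀̄` acts on the one-dimensional module `Λ^max(𝔤₁)`. -/
def traceCharPos (L : GLSA) (x : L.g0) : ℂ := LinearMap.trace ℂ ↥L.gpos (adPos L x)

/-- The character by which `𝔤₀̄` acts on the one-dimensional module `Λ^max(𝔤₋₁)`. -/
def traceCharNeg (L : GLSA) (x : L.g0) : ℂ := LinearMap.trace ℂ ↥L.gneg (adNeg L x)

/-- `IsTwistBy V W χ swap` expresses that `W ≅ ℂ_χ ⊗ V` as `𝔤₀̄`-supermodules, where `ℂ_χ`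
is the one-dimensional module with character `χ`, of odd parity iff `swap = true`.
Taking `χ` to be `traceCharPos`/`traceCharNeg` (resp. their negatives) and `swap` the parity
of `dim 𝔤±₁` expresses `W ≅ Λ^max(𝔤±₁) ⊗ V` (resp. `W ≅ Λ^max(𝔤±₁^*) ⊗ V`). -/
def IsTwistBy {L : GLSA} (V W : SMod0 L) (χ : ↥L.g0 → ℂ) (swap : Bool) : Prop :=
  ∃ e : V.carrier ≃ₗ[ℂ] W.carrier,
    (∀ (x : L.g0) (v : V.carrier), W.act x (e v) = e (V.act x v) + χ x • e v) ∧
    (if swap then (∀ v ∈ V.ev, e v ∈ W.od) ∧ (∀ v ∈ V.od, e v ∈ W.ev)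
     else (∀ v ∈ V.ev, e v ∈ W.ev) ∧ (∀ v ∈ V.od, e v ∈ W.od))

/-- Parity (as a `Bool`) of `dim 𝔤₁`. -/
def parPos (L : GLSA) : Bool := (finrank ℂ ↥L.gpos) % 2 == 1

/-- Parity (as a `Bool`) of `dim 𝔤₋₁`. -/
def parNeg (L : GLSA) : Bool := (finrank ℂ ↥L.gneg) % 2 == 1


section Aux

open Submodule

namespace Statement12

variable {L : GLSA}

/-! ### Lattice facts about the grading of `L` -/

lemma neg_le_odd : L.gneg ≤ L.odd := le_sup_left
lemma pos_le_odd : L.gpos ≤ L.odd := le_sup_right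

lemma isCompl_pos (L : GLSA) : IsCompl L.gpos (L.g0 ⊔ L.gneg) := by
  constructor
  · have h1 : Disjoint L.gpos L.gneg := L.disjNP.symm
    have h2 : Disjoint (L.gpos ⊔ L.gneg) L.g0 := by
      rw [sup_comm]; exact L.oddCompl.disjoint.symm
    have h3 := h1.disjoint_sup_right_of_disjoint_sup_left h2
    rwa [sup_comm L.gneg L.g0] at h3
  · rw [codisjoint_iff]
    have h := codisjoint_iff.mp L.oddCompl.codisjoint
    rw [sup_comm L.gpos (L.g0 ⊔ L.gneg), sup_assoc]; exact h

lemma isCompl_neg (L : GLSA) : IsCompl L.gneg (L.g0 ⊔ L.gpos) := by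
  constructor
  · have h1 : Disjoint L.gneg L.gpos := L.disjNP
    have h2 : Disjoint (L.gneg ⊔ L.gpos) L.g0 := L.oddCompl.disjoint.symm
    have h3 := h1.disjoint_sup_right_of_disjoint_sup_left h2
    rwa [sup_comm L.gpos L.g0] at h3
  · rw [codisjoint_iff]
    have h := codisjoint_iff.mp L.oddCompl.codisjoint
    rw [sup_comm L.gneg (L.g0 ⊔ L.gpos), sup_assoc, sup_comm L.gpos L.gneg]; exact h

/-- The grading derivation `N` of `𝔤`: `-1` on `𝔤₋₁`, `0` on `𝔤₀`, `+1` on `𝔤₁`. -/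
noncomputable def Nmap (L : GLSA) : L.carrier →ₗ[ℂ] L.carrier :=
  L.gpos.subtype ∘ₗ (Submodule.projectionOnto _ _ (isCompl_pos L))
    - L.gneg.subtype ∘ₗ (Submodule.projectionOnto _ _ (isCompl_neg L))

lemma Nmap_g0 {x : L.carrier} (hx : x ∈ L.g0) : Nmap L x = 0 := by
  simp [Nmap, LinearMap.sub_apply,
    Submodule.projectionOnto_apply_of_mem_right (isCompl_pos L)
      (Submodule.mem_sup_left hx),
    Submodule.projectionOnto_apply_of_mem_right (isCompl_neg L)
      (Submodule.mem_sup_left hx)]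

lemma Nmap_neg {x : L.carrier} (hx : x ∈ L.gneg) : Nmap L x = -x := by
  simp [Nmap, LinearMap.sub_apply,
    Submodule.projectionOnto_apply_of_mem_right (isCompl_pos L)
      (Submodule.mem_sup_right hx),
    Submodule.projectionOnto_apply_left (isCompl_neg L) ⟨x, hx⟩]

lemma Nmap_pos {x : L.carrier} (hx : x ∈ L.gpos) : Nmap L x = x := by
  simp [Nmap, LinearMap.sub_apply,
    Submodule.projectionOnto_apply_left (isCompl_pos L) ⟨x, hx⟩,
    Submodule.projectionOnto_apply_of_mem_right (isCompl_neg L)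
      (Submodule.mem_sup_right hx)]

lemma Nmap_mem_odd (x : L.carrier) : Nmap L x ∈ L.odd := by
  apply Submodule.sub_mem
  · exact pos_le_odd (Submodule.coe_mem _)
  · exact neg_le_odd (Submodule.coe_mem _)

lemma exists_decomp (L : GLSA) (x : L.carrier) :
    ∃ a ∈ L.g0, ∃ b ∈ L.gneg, ∃ c ∈ L.gpos, x = a + b + c := by
  have hx : x ∈ L.g0 ⊔ (L.gneg ⊔ L.gpos) := by
    rw [codisjoint_iff.mp L.oddCompl.codisjoint]; trivial
  obtain ⟨a, ha, y, hy, hxy⟩ := Submodule.mem_sup.mp hx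
  obtain ⟨b, hb, c, hc, hybc⟩ := Submodule.mem_sup.mp hy
  exact ⟨a, ha, b, hb, c, hc, by rw [← hxy, ← hybc, add_assoc]⟩

lemma exists_decomp_odd {x : L.carrier} (hx : x ∈ L.odd) :
    ∃ b ∈ L.gneg, ∃ c ∈ L.gpos, x = b + c := by
  obtain ⟨b, hb, c, hc, h⟩ := Submodule.mem_sup.mp hx
  exact ⟨b, hb, c, hc, h.symm⟩

lemma Nmap_bracket_left {x : L.carrier} (hx : x ∈ L.g0) (y : L.carrier) :
    Nmap L (L.bracket x y) = L.bracket x (Nmap L y) := by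
  obtain ⟨a, ha, b, hb, c, hc, rfl⟩ := exists_decomp L y
  have h1 : Nmap L (L.bracket x a) = 0 := Nmap_g0 (L.br_00 x hx a ha)
  have h2 : Nmap L (L.bracket x b) = -(L.bracket x b) := Nmap_neg (L.br_0n x hx b hb)
  have h3 : Nmap L (L.bracket x c) = L.bracket x c := Nmap_pos (L.br_0p x hx c hc)
  have hNa : Nmap L a = 0 := Nmap_g0 ha
  have hNb : Nmap L b = -b := Nmap_neg hb
  have hNc : Nmap L c = c := Nmap_pos hc
  simp only [map_add, h1, h2, h3, hNa, hNb, hNc, LinearMap.map_neg, map_zero]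

lemma Nmap_bracket_right {y : L.carrier} (hy : y ∈ L.g0) (x : L.carrier) :
    Nmap L (L.bracket x y) = L.bracket (Nmap L x) y := by
  have h1 : L.bracket x y = -(L.bracket y x) := by
    rw [L.skew_e y hy x, neg_neg]
  have h2 : L.bracket (Nmap L x) y = -(L.bracket y (Nmap L x)) := by
    rw [L.skew_e y hy (Nmap L x), neg_neg]
  rw [h1, h2, map_neg, Nmap_bracket_left hy x]

lemma Nmap_bracket_oo {x y : L.carrier} (hx : x ∈ L.odd) (hy : y ∈ L.odd) :
    Nmap L (L.bracket x y) = 0 ∧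
      L.bracket x (Nmap L y) + L.bracket (Nmap L x) y = 0 := by
  obtain ⟨b, hb, c, hc, rfl⟩ := exists_decomp_odd hx
  obtain ⟨b', hb', c', hc', rfl⟩ := exists_decomp_odd hy
  have hNx : Nmap L (b + c) = c - b := by
    rw [map_add, Nmap_neg hb, Nmap_pos hc]; abel
  have hNy : Nmap L (b' + c') = c' - b' := by
    rw [map_add, Nmap_neg hb', Nmap_pos hc']; abel
  have hbb : L.bracket b b' = 0 := L.br_nn b hb b' hb'
  have hcc : L.bracket c c' = 0 := L.br_pp c hc c' hc'
  constructor
  · have h1 : L.bracket b c' ∈ L.g0 := by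
      rw [L.skew_oo b (neg_le_odd hb) c' (pos_le_odd hc')]
      exact L.br_pn c' hc' b hb
    have h2 : L.bracket c b' ∈ L.g0 := L.br_pn c hc b' hb'
    have : L.bracket (b + c) (b' + c') = L.bracket b c' + L.bracket c b' := by
      simp only [map_add, LinearMap.add_apply, hbb, hcc]; abel
    rw [this, map_add, Nmap_g0 h1, Nmap_g0 h2, add_zero]
  · rw [hNx, hNy]
    simp only [map_add, map_sub, LinearMap.add_apply, LinearMap.sub_apply, hbb, hcc]
    have hbc' : L.bracket b c' = L.bracket c' b :=
      L.skew_oo b (neg_le_odd hb) c' (pos_le_odd hc')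
    abel

end Statement12
end Aux

namespace Statement12

open Submodule

variable {L : GLSA}

/-! ### Generalities on supermodules -/

lemma grading_eq_zero (M : SMod L) {z : M.carrier} (h1 : z ∈ M.ev) (h2 : z ∈ M.od) :
    z = 0 :=
  Submodule.disjoint_def.mp M.grading.disjoint z h1 h2

lemma grading_decomp (M : SMod L) (m : M.carrier) :
    ∃ e ∈ M.ev, ∃ o ∈ M.od, m = e + o := by
  have hm : m ∈ M.ev ⊔ M.od := by
    rw [codisjoint_iff.mp M.grading.codisjoint]; trivial
  obtain ⟨e, he, o, ho, h⟩ := Submodule.mem_sup.mp hm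
  exact ⟨e, he, o, ho, h.symm⟩

lemma actList_nil (M : SMod L) (m : M.carrier) : M.actList [] m = m := rfl

lemma actList_cons (M : SMod L) (x : L.carrier) (xs : List L.carrier) (m : M.carrier) :
    M.actList (x :: xs) m = M.act x (M.actList xs m) := rfl

lemma actList_append (M : SMod L) (a b : List L.carrier) (m : M.carrier) :
    M.actList (a ++ b) m = M.actList a (M.actList b m) := by
  induction a with
  | nil => rfl
  | cons x t ih => simp only [List.cons_append, actList_cons, ih]

lemma actList_concat (M : SMod L) (a : List L.carrier) (u : L.carrier) (m : M.carrier) :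
    M.actList (a ++ [u]) m = M.actList a (M.act u m) := by
  rw [actList_append]; rfl

lemma actList_zero (M : SMod L) (l : List L.carrier) : M.actList l 0 = 0 := by
  induction l with
  | nil => rfl
  | cons x t ih => rw [actList_cons, ih, map_zero]

lemma actList_add (M : SMod L) (l : List L.carrier) (m m' : M.carrier) :
    M.actList l (m + m') = M.actList l m + M.actList l m' := by
  induction l with
  | nil => rfl
  | cons x t ih => rw [actList_cons, ih, map_add]; rfl

lemma actList_smul (M : SMod L) (l : List L.carrier) (c : ℂ) (m : M.carrier) :
    M.actList l (c • m) = c • M.actList l m := by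
  induction l with
  | nil => rfl
  | cons x t ih => rw [actList_cons, ih, map_smul]; rfl

lemma act_mem_of_span {M : SMod L} {S : Set M.carrier} {T : Submodule ℂ M.carrier}
    (F : M.carrier →ₗ[ℂ] M.carrier) (hgen : ∀ s ∈ S, F s ∈ T) {m : M.carrier}
    (hm : m ∈ span ℂ S) : F m ∈ T := by
  induction hm using Submodule.span_induction with
  | mem x h => exact hgen x h
  | zero => rw [map_zero]; exact T.zero_mem
  | add x y hx hy ihx ihy => rw [map_add]; exact T.add_mem ihx ihy
  | smul c x hx ih => rw [map_smul]; exact T.smul_mem c ih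

lemma graded_span {M : SMod L} {S : Set M.carrier}
    (hS : ∀ s ∈ S, s ∈ M.ev ∨ s ∈ M.od) :
    span ℂ S ≤ (span ℂ S ⊓ M.ev) ⊔ (span ℂ S ⊓ M.od) := by
  apply Submodule.span_le.mpr
  intro s hs
  rcases hS s hs with h | h
  · exact Submodule.mem_sup_left ⟨Submodule.subset_span hs, h⟩
  · exact Submodule.mem_sup_right ⟨Submodule.subset_span hs, h⟩

/-! ### Sign rules for the action of `𝔤₋₁` -/

lemma act_neg_neg (M : SMod L) {x y : L.carrier} (hx : x ∈ L.gneg) (hy : y ∈ L.gneg)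
    (m : M.carrier) : M.act x (M.act y m) = - M.act y (M.act x m) := by
  have h := M.act_br_oo x (neg_le_odd hx) y (neg_le_odd hy) m
  rw [L.br_nn x hx y hy] at h
  simp only [map_zero, LinearMap.zero_apply] at h
  exact add_eq_zero_iff_eq_neg.mp h.symm

lemma act_neg_sq (M : SMod L) {x : L.carrier} (hx : x ∈ L.gneg) (m : M.carrier) :
    M.act x (M.act x m) = 0 := by
  have h := act_neg_neg M hx hx m
  have h2 : M.act x (M.act x m) + M.act x (M.act x m) = 0 := by
    nth_rewrite 1 [h]; abel
  have h3 : (2 : ℂ) • M.act x (M.act x m) = 0 := by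
    rw [two_smul]; exact h2
  simpa using (smul_eq_zero.mp h3).resolve_left (by norm_num)

lemma pull (M : SMod L) {x : L.carrier} (hx : x ∈ L.gneg) (p q : List L.carrier)
    (hp : ∀ z ∈ p, z ∈ L.gneg) (m : M.carrier) :
    M.actList (p ++ x :: q) m = ((-1 : ℂ)) ^ p.length • M.actList (x :: (p ++ q)) m := by
  induction p with
  | nil => simp
  | cons a t ih =>
    have ha : a ∈ L.gneg := hp a List.mem_cons_self
    have ht : ∀ z ∈ t, z ∈ L.gneg := fun z hz => hp z (List.mem_cons_of_mem a hz)
    have key := act_neg_neg M ha hx (M.actList (t ++ q) m)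
    show M.act a (M.actList (t ++ x :: q) m) = _
    rw [ih ht, map_smul]
    show ((-1 : ℂ)) ^ t.length • M.act a (M.act x (M.actList (t ++ q) m)) =
      ((-1 : ℂ)) ^ (a :: t).length • M.act x (M.act a (M.actList (t ++ q) m))
    rw [key, List.length_cons, pow_succ, mul_smul, smul_neg, neg_one_smul, smul_neg]

lemma comb (M : SMod L) (rest : List L.carrier) (m : M.carrier) {y : L.carrier}
    (hrest : ∀ z ∈ rest, z ∈ L.gneg)
    (hy : y ∈ span ℂ {z | z ∈ rest}) :
    M.act y (M.actList rest m) = 0 := by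
  induction hy using Submodule.span_induction with
  | mem z hz =>
    obtain ⟨s, t, hst⟩ := List.append_of_mem hz
    have hs : ∀ w ∈ s, w ∈ L.gneg := fun w hw => hrest w (by rw [hst]; simp [hw])
    have hzneg : z ∈ L.gneg := hrest z hz
    rw [hst, pull M hzneg s t hs m, map_smul, actList_cons, act_neg_sq M hzneg,
      smul_zero]
  | zero => simp only [map_zero, LinearMap.zero_apply]
  | add a b ha hb iha ihb =>
    rw [map_add, LinearMap.add_apply, iha, ihb, add_zero]
  | smul c a ha ih =>
    rw [map_smul, LinearMap.smul_apply, ih, smul_zero]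

lemma van [FiniteDimensional ℂ ↥L.gneg] (M : SMod L) (l : List L.carrier)
    (hl : ∀ z ∈ l, z ∈ L.gneg) (hlen : finrank ℂ ↥L.gneg < l.length) (m : M.carrier) :
    M.actList l m = 0 := by
  classical
  set n := l.length with hn
  have hw : ∀ i : Fin n, l.get i ∈ L.gneg := fun i => hl _ (l.get_mem i)
  set w : Fin n → ↥L.gneg := fun i => ⟨l.get i, hw i⟩ with hwdef
  have hdep : ¬ LinearIndependent ℂ w := by
    intro h
    have hcard := h.fintype_card_le_finrank
    rw [Fintype.card_fin] at hcard
    omega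
  obtain ⟨g, hsum, j, hgj⟩ := Fintype.not_linearIndependent_iff.mp hdep
  -- push the relation down to `L.carrier`
  have hsum' : ∑ i : Fin n, g i • l.get i = 0 := by
    have := congrArg (fun z => (L.gneg.subtype z : L.carrier)) hsum
    simpa [map_sum, hwdef] using this
  -- the distinguished entry lies in the span of the others
  set p := l.take (j : ℕ) with hp
  set q := l.drop ((j : ℕ) + 1) with hq
  have hjlt : (j : ℕ) < l.length := j.2
  have hsplit : l = p ++ l.get j :: q := by
    rw [hp, hq]
    rw [List.get_eq_getElem]
    rw [← List.drop_eq_getElem_cons hjlt]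
    exact (List.take_append_drop (j : ℕ) l).symm
  have hmem : ∀ i : Fin n, i ≠ j → l.get i ∈ {z | z ∈ p ++ q} := by
    intro i hij
    simp only [Set.mem_setOf_eq, List.mem_append]
    rcases lt_or_gt_of_ne (fun h => hij (Fin.ext h)) with h | h
    · left
      rw [hp]
      have : l.get i = (l.take (j : ℕ)).get ⟨(i : ℕ), by
        rw [List.length_take]; exact lt_min h (lt_of_lt_of_le (Nat.lt_of_lt_of_le h (le_of_lt hjlt)) le_rfl)⟩ := by
        simp [List.get_eq_getElem, List.getElem_take]
      rw [this]; exact List.get_mem _ _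
    · right
      rw [hq]
      have hi : (j : ℕ) + 1 + ((i : ℕ) - ((j : ℕ) + 1)) = (i : ℕ) := by omega
      have hlt : (i : ℕ) - ((j : ℕ) + 1) < (l.drop ((j : ℕ) + 1)).length := by
        rw [List.length_drop]; omega
      have : l.get i = (l.drop ((j : ℕ) + 1)).get ⟨(i : ℕ) - ((j : ℕ) + 1), hlt⟩ := by
        simp only [List.get_eq_getElem, List.getElem_drop]
        congr 1; omega
      rw [this]; exact List.get_mem _ _
  have hspan : l.get j ∈ span ℂ {z | z ∈ p ++ q} := by
    have hrel : l.get j = (-(g j)⁻¹) • ∑ i ∈ Finset.univ.erase j, g i • l.get i := by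
      have hsplitsum : g j • l.get j + ∑ i ∈ Finset.univ.erase j, g i • l.get i = 0 := by
        rw [← Finset.add_sum_erase _ _ (Finset.mem_univ j)] at hsum'
        exact hsum'
      have h2 : g j • l.get j = - ∑ i ∈ Finset.univ.erase j, g i • l.get i :=
        eq_neg_of_add_eq_zero_left hsplitsum
      have h3 := congrArg (fun z => (g j)⁻¹ • z) h2
      simp only [smul_smul, inv_mul_cancel₀ hgj, one_smul, smul_neg] at h3
      rw [h3, neg_smul]
    rw [hrel]
    apply Submodule.smul_mem
    apply Submodule.sum_mem
    intro i hi
    exact Submodule.smul_mem _ _ (Submodule.subset_span (hmem i (Finset.ne_of_mem_erase hi)))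
  have hpq : ∀ z ∈ p ++ q, z ∈ L.gneg := by
    intro z hz
    apply hl
    rw [hsplit]
    rcases List.mem_append.mp hz with h | h
    · exact List.mem_append.mpr (Or.inl h)
    · exact List.mem_append.mpr (Or.inr (List.mem_cons_of_mem _ h))
  have hpneg : ∀ z ∈ p, z ∈ L.gneg := fun z hz => hpq z (List.mem_append.mpr (Or.inl hz))
  have hjneg : l.get j ∈ L.gneg := hw j
  calc M.actList l m = M.actList (p ++ l.get j :: q) m := by rw [← hsplit]
    _ = ((-1 : ℂ)) ^ p.length • M.actList (l.get j :: (p ++ q)) m :=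
        pull M hjneg p q hpneg m
    _ = ((-1 : ℂ)) ^ p.length • M.act (l.get j) (M.actList (p ++ q) m) := rfl
    _ = 0 := by rw [comb M (p ++ q) m hpq hspan, smul_zero]

end Statement12

namespace Statement12

open Submodule

variable {L : GLSA}

/-! ### The doubled module `K ⊕ K` twisted by the grading derivation `N` -/

noncomputable def Dbl (K : SMod L) : SMod L where
  carrier := K.carrier × K.carrier
  act := LinearMap.mk₂ ℂ
    (fun x m => (K.act x m.1, K.act x m.2 + K.act (Nmap L x) m.1))
    (fun x x' m => by
      simp only [map_add, LinearMap.add_apply, Prod.mk_add_mk, Prod.mk.injEq, true_and]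
      abel)
    (fun c x m => by
      simp only [map_smul, LinearMap.smul_apply, Prod.smul_mk, Prod.mk.injEq, smul_add])
    (fun x m m' => by
      simp only [Prod.fst_add, Prod.snd_add, map_add, Prod.mk_add_mk, Prod.mk.injEq,
        true_and]
      abel)
    (fun c x m => by
      simp only [Prod.smul_fst, Prod.smul_snd, map_smul, Prod.smul_mk, Prod.mk.injEq,
        smul_add])
  ev := K.ev.prod K.ev
  od := K.od.prod K.od
  grading := by
    constructor
    · rw [Submodule.disjoint_def]
      rintro ⟨a, b⟩ ⟨ha1, hb1⟩ ⟨ha2, hb2⟩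
      rw [Prod.mk.injEq]
      exact ⟨grading_eq_zero K ha1 ha2, grading_eq_zero K hb1 hb2⟩
    · rw [codisjoint_iff, eq_top_iff]
      rintro ⟨a, b⟩ -
      obtain ⟨ae, hae, ao, hao, ha⟩ := grading_decomp K a
      obtain ⟨be, hbe, bo, hbo, hb⟩ := grading_decomp K b
      have : (a, b) = ((ae, be) : K.carrier × K.carrier) + (ao, bo) := by
        rw [Prod.mk_add_mk, ← ha, ← hb]
      rw [this]
      exact Submodule.add_mem _ (Submodule.mem_sup_left ⟨hae, hbe⟩)
        (Submodule.mem_sup_right ⟨hao, hbo⟩)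
  act_e_ev := by
    rintro x hx ⟨a, b⟩ ⟨ha, hb⟩
    simp only [LinearMap.mk₂_apply, Nmap_g0 hx, map_zero, LinearMap.zero_apply, add_zero]
    exact ⟨K.act_e_ev x hx a ha, K.act_e_ev x hx b hb⟩
  act_e_od := by
    rintro x hx ⟨a, b⟩ ⟨ha, hb⟩
    simp only [LinearMap.mk₂_apply, Nmap_g0 hx, map_zero, LinearMap.zero_apply, add_zero]
    exact ⟨K.act_e_od x hx a ha, K.act_e_od x hx b hb⟩
  act_o_ev := by
    rintro x hx ⟨a, b⟩ ⟨ha, hb⟩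
    refine ⟨K.act_o_ev x hx a ha, Submodule.add_mem _ (K.act_o_ev x hx b hb) ?_⟩
    exact K.act_o_ev _ (Nmap_mem_odd x) a ha
  act_o_od := by
    rintro x hx ⟨a, b⟩ ⟨ha, hb⟩
    refine ⟨K.act_o_od x hx a ha, Submodule.add_mem _ (K.act_o_od x hx b hb) ?_⟩
    exact K.act_o_od _ (Nmap_mem_odd x) a ha
  act_br_e := by
    rintro x y hxy ⟨a, b⟩
    have hb := K.act_br_e x y hxy b
    have ha := K.act_br_e x y hxy a
    rcases hxy with hx | hy
    · have hN : Nmap L (L.bracket x y) = L.bracket x (Nmap L y) := Nmap_bracket_left hx y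
      have hNa := K.act_br_e x (Nmap L y) (Or.inl hx) a
      simp only [LinearMap.mk₂_apply, Nmap_g0 hx, map_zero, LinearMap.zero_apply,
        add_zero, Prod.mk_sub_mk, Prod.mk.injEq, hN]
      refine ⟨ha, ?_⟩
      rw [hb, hNa, map_add]
      abel
    · have hN : Nmap L (L.bracket x y) = L.bracket (Nmap L x) y := Nmap_bracket_right hy x
      have hNa := K.act_br_e (Nmap L x) y (Or.inr hy) a
      simp only [LinearMap.mk₂_apply, Nmap_g0 hy, map_zero, LinearMap.zero_apply,
        add_zero, Prod.mk_sub_mk, Prod.mk.injEq, hN]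
      refine ⟨ha, ?_⟩
      rw [hb, hNa, map_add]
      abel
  act_br_oo := by
    rintro x hx y hy ⟨a, b⟩
    obtain ⟨hN0, hNsum⟩ := Nmap_bracket_oo hx hy
    have hb := K.act_br_oo x hx y hy b
    have h1 := K.act_br_oo x hx (Nmap L y) (Nmap_mem_odd y) a
    have h2 := K.act_br_oo (Nmap L x) (Nmap_mem_odd x) y hy a
    have h3 : K.act x (K.act (Nmap L y) a) + K.act (Nmap L y) (K.act x a)
        + (K.act (Nmap L x) (K.act y a) + K.act y (K.act (Nmap L x) a)) = 0 := by
      rw [← h1, ← h2, ← LinearMap.add_apply, ← map_add, hNsum, map_zero,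
        LinearMap.zero_apply]
    simp only [LinearMap.mk₂_apply, hN0, map_zero, LinearMap.zero_apply, add_zero,
      Prod.mk_add_mk, Prod.mk.injEq]
    refine ⟨K.act_br_oo x hx y hy a, ?_⟩
    rw [hb, map_add, map_add]
    symm
    rw [← sub_eq_zero, ← h3]
    abel

end Statement12

namespace Statement12

open Submodule

variable {L : GLSA}

/-- The identity super-homomorphism. -/
def idHom (M : SMod L) : SHom M M :=
  ⟨LinearMap.id, fun _ h => h, fun _ h => h, fun _ _ => rfl⟩

lemma exists_D {V : SMod0 L} {K : SMod L} {η : V.carrier →ₗ[ℂ] K.carrier}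
    (hK : IsKac V K η) :
    ∃ D : K.carrier →ₗ[ℂ] K.carrier,
      (∀ v, D (η v) = 0) ∧
      (∀ (x : L.carrier) (m : K.carrier),
        D (K.act x m) = K.act x (D m) + K.act (Nmap L x) m) := by
  classical
  have hudbl := hK.universal (Dbl K) (LinearMap.prod η 0)
    (by
      intro v hv
      exact ⟨hK.map_ev v hv, Submodule.zero_mem _⟩)
    (by
      intro v hv
      exact ⟨hK.map_od v hv, Submodule.zero_mem _⟩)
    (by
      intro x v
      have h := hK.equivar x v
      show (η (V.act x v), (0 : K.carrier))
        = (K.act ↑x (η v), K.act ↑x 0 + K.act (Nmap L ↑x) (η v))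
      rw [Nmap_g0 x.2, map_zero, map_zero, LinearMap.zero_apply, add_zero, h])
    (by
      intro x hx v
      show (K.act x (η v), K.act x 0 + K.act (Nmap L x) (η v)) = 0
      rw [Nmap_pos hx, hK.pos_zero x hx v, map_zero, zero_add]
      rfl)
  obtain ⟨Φ, hΦ, -⟩ := hudbl
  obtain ⟨Ψ, hΨ, huniq⟩ := hK.universal K η hK.map_ev hK.map_od hK.equivar hK.pos_zero
  have hfst : ∀ m : K.carrier, (Φ.toLin m).1 = m := by
    have hIdEq : idHom K = Ψ := huniq (idHom K) (fun v => rfl)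
    have hFstEq : (⟨(LinearMap.fst ℂ K.carrier K.carrier) ∘ₗ Φ.toLin,
        fun m hm => (Φ.map_ev m hm).1,
        fun m hm => (Φ.map_od m hm).1,
        fun x m => congrArg Prod.fst (Φ.equivar x m)⟩ : SHom K K) = Ψ := by
      apply huniq
      intro v
      exact congrArg Prod.fst (hΦ v)
    have h2 := hFstEq.trans hIdEq.symm
    intro m
    exact congrArg (fun (h : SHom K K) => h.toLin m) h2
  refine ⟨(LinearMap.snd ℂ K.carrier K.carrier) ∘ₗ Φ.toLin, ?_, ?_⟩
  · intro v
    exact congrArg Prod.snd (hΦ v)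
  · intro x m
    have hsnd : (Φ.toLin (K.act x m)).2
        = K.act x (Φ.toLin m).2 + K.act (Nmap L x) (Φ.toLin m).1 :=
      congrArg Prod.snd (Φ.equivar x m)
    rw [hfst m] at hsnd
    exact hsnd

end Statement12

namespace Statement12

open Submodule

variable {L : GLSA}

/-! ### Monomials `𝔤₋₁ ⋯ 𝔤₋₁ · η(V)` and the spans they generate -/

def Mono (V : SMod0 L) (K : SMod L) (η : V.carrier →ₗ[ℂ] K.carrier) (l : ℕ) :
    Set K.carrier :=
  {m | ∃ ys v, (∀ y ∈ ys, y ∈ L.gneg) ∧ ys.length = l ∧ m = K.actList ys (η v)}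

def SpanM (V : SMod0 L) (K : SMod L) (η : V.carrier →ₗ[ℂ] K.carrier) (l : ℕ) :
    Submodule ℂ K.carrier := span ℂ (Mono V K η l)

def Kplus (V : SMod0 L) (K : SMod L) (η : V.carrier →ₗ[ℂ] K.carrier) :
    Submodule ℂ K.carrier := span ℂ (⋃ l, Mono V K η (l + 1))

variable {V : SMod0 L} {K : SMod L} {η : V.carrier →ₗ[ℂ] K.carrier}

lemma eta_mem_mono (v : V.carrier) : η v ∈ Mono V K η 0 :=
  ⟨[], v, by simp, rfl, rfl⟩

lemma span0_eq : SpanM V K η 0 = LinearMap.range η := by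
  apply le_antisymm
  · apply span_le.mpr
    rintro m ⟨ys, v, hys, hlen, rfl⟩
    rw [List.length_eq_zero_iff.mp hlen]
    exact ⟨v, rfl⟩
  · rintro m ⟨v, rfl⟩
    exact subset_span (eta_mem_mono v)

lemma spanM_le_kplus (l : ℕ) : SpanM V K η (l + 1) ≤ Kplus V K η :=
  span_mono (Set.subset_iUnion (fun l => Mono V K η (l + 1)) l)

lemma neg_act_mono {y : L.carrier} (hy : y ∈ L.gneg) {s : K.carrier} {l : ℕ}
    (hs : s ∈ Mono V K η l) : K.act y s ∈ Mono V K η (l + 1) := by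
  obtain ⟨ys, v, hys, hlen, rfl⟩ := hs
  refine ⟨y :: ys, v, ?_, by simp [hlen], rfl⟩
  intro z hz
  rcases List.mem_cons.mp hz with h | h
  · rw [h]; exact hy
  · exact hys z h

lemma neg_act_spanM {y : L.carrier} (hy : y ∈ L.gneg) {m : K.carrier} {l : ℕ}
    (hm : m ∈ SpanM V K η l) : K.act y m ∈ SpanM V K η (l + 1) :=
  act_mem_of_span (K.act y) (fun s hs => subset_span (neg_act_mono hy hs)) hm

lemma g0_actList (hK : IsKac V K η) {x : L.carrier} (hx : x ∈ L.g0) :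
    ∀ (ys : List L.carrier), (∀ y ∈ ys, y ∈ L.gneg) → ∀ v,
      K.act x (K.actList ys (η v)) ∈ SpanM V K η ys.length := by
  intro ys
  induction ys with
  | nil =>
    intro _ v
    rw [actList_nil]
    have h := hK.equivar ⟨x, hx⟩ v
    rw [← h]
    exact subset_span (eta_mem_mono _)
  | cons y t ih =>
    intro h v
    have hy : y ∈ L.gneg := h y List.mem_cons_self
    have ht : ∀ z ∈ t, z ∈ L.gneg := fun z hz => h z (List.mem_cons_of_mem _ hz)
    rw [actList_cons]
    have hbr := K.act_br_e x y (Or.inl hx) (K.actList t (η v))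
    have hxy : K.act x (K.act y (K.actList t (η v)))
        = K.act (L.bracket x y) (K.actList t (η v))
          + K.act y (K.act x (K.actList t (η v))) := by
      rw [hbr]; abel
    rw [hxy]
    apply Submodule.add_mem
    · apply subset_span
      refine ⟨L.bracket x y :: t, v, ?_, by simp, rfl⟩
      intro z hz
      rcases List.mem_cons.mp hz with h1 | h2
      · rw [h1]; exact L.br_0n x hx y hy
      · exact ht z h2
    · exact neg_act_spanM hy (ih ht v)

lemma g0_act_mono (hK : IsKac V K η) {x : L.carrier} (hx : x ∈ L.g0) {s : K.carrier}
    {l : ℕ} (hs : s ∈ Mono V K η l) : K.act x s ∈ SpanM V K η l := by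
  obtain ⟨ys, v, hys, hlen, rfl⟩ := hs
  rw [← hlen]
  exact g0_actList hK hx ys hys v

lemma g0_act_spanM (hK : IsKac V K η) {x : L.carrier} (hx : x ∈ L.g0) {m : K.carrier}
    {l : ℕ} (hm : m ∈ SpanM V K η l) : K.act x m ∈ SpanM V K η l :=
  act_mem_of_span (K.act x) (fun s hs => g0_act_mono hK hx hs) hm

lemma pos_actList (hK : IsKac V K η) {u : L.carrier} (hu : u ∈ L.gpos) :
    ∀ (ys : List L.carrier), (∀ y ∈ ys, y ∈ L.gneg) → ∀ v,
      K.act u (K.actList ys (η v)) ∈ SpanM V K η (ys.length - 1) := by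
  intro ys
  induction ys with
  | nil =>
    intro _ v
    rw [actList_nil, hK.pos_zero u hu v]
    exact Submodule.zero_mem _
  | cons y t ih =>
    intro h v
    have hy : y ∈ L.gneg := h y List.mem_cons_self
    have ht : ∀ z ∈ t, z ∈ L.gneg := fun z hz => h z (List.mem_cons_of_mem _ hz)
    rw [actList_cons]
    have hbr := K.act_br_oo u (pos_le_odd hu) y (neg_le_odd hy) (K.actList t (η v))
    have hxy : K.act u (K.act y (K.actList t (η v)))
        = K.act (L.bracket u y) (K.actList t (η v))
          - K.act y (K.act u (K.actList t (η v))) := by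
      rw [hbr]; abel
    rw [hxy]
    have hlen : (y :: t).length - 1 = t.length := by simp
    rw [hlen]
    apply Submodule.sub_mem
    · exact g0_act_mono hK (L.br_pn u hu y hy) ⟨t, v, ht, rfl, rfl⟩
    · cases t with
      | nil =>
        rw [actList_nil, hK.pos_zero u hu v, map_zero]
        exact Submodule.zero_mem _
      | cons z s =>
        have h1 := ih ht v
        have h2 := neg_act_spanM hy h1
        simpa using h2

lemma pos_act_mono (hK : IsKac V K η) {u : L.carrier} (hu : u ∈ L.gpos) {s : K.carrier}
    {l : ℕ} (hs : s ∈ Mono V K η l) : K.act u s ∈ SpanM V K η (l - 1) := by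
  obtain ⟨ys, v, hys, hlen, rfl⟩ := hs
  rw [← hlen]
  exact pos_actList hK hu ys hys v

lemma actList_homog (hpure : ∀ v : V.carrier, η v ∈ K.ev ∨ η v ∈ K.od) :
    ∀ (ys : List L.carrier), (∀ y ∈ ys, y ∈ L.gneg) → ∀ v,
      K.actList ys (η v) ∈ K.ev ∨ K.actList ys (η v) ∈ K.od := by
  intro ys
  induction ys with
  | nil => intro _ v; exact hpure v
  | cons y t ih =>
    intro h v
    have hy : y ∈ L.odd := neg_le_odd (h y List.mem_cons_self)
    have ht : ∀ z ∈ t, z ∈ L.gneg := fun z hz => h z (List.mem_cons_of_mem _ hz)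
    rw [actList_cons]
    rcases ih ht v with he | ho
    · exact Or.inr (K.act_o_ev y hy _ he)
    · exact Or.inl (K.act_o_od y hy _ ho)

lemma mono_homog (hpure : ∀ v : V.carrier, η v ∈ K.ev ∨ η v ∈ K.od) {s : K.carrier}
    {l : ℕ} (hs : s ∈ Mono V K η l) : s ∈ K.ev ∨ s ∈ K.od := by
  obtain ⟨ys, v, hys, hlen, rfl⟩ := hs
  exact actList_homog hpure ys hys v

lemma kplus_graded (hpure : ∀ v : V.carrier, η v ∈ K.ev ∨ η v ∈ K.od) {t : K.carrier}
    (ht : t ∈ Kplus V K η) :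
    ∃ t1 ∈ Kplus V K η ⊓ K.ev, ∃ t2 ∈ Kplus V K η ⊓ K.od, t = t1 + t2 := by
  have hle : Kplus V K η ≤ (Kplus V K η ⊓ K.ev) ⊔ (Kplus V K η ⊓ K.od) := by
    apply graded_span
    intro s hs
    obtain ⟨l, hl⟩ := Set.mem_iUnion.mp hs
    exact mono_homog hpure hl
  obtain ⟨t1, h1, t2, h2, h⟩ := Submodule.mem_sup.mp (hle ht)
  exact ⟨t1, h1, t2, h2, h.symm⟩

lemma kplus_neg {y : L.carrier} (hy : y ∈ L.gneg) {m : K.carrier}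
    (hm : m ∈ Kplus V K η) : K.act y m ∈ Kplus V K η := by
  apply act_mem_of_span (K.act y) _ hm
  intro s hs
  obtain ⟨l, hl⟩ := Set.mem_iUnion.mp hs
  exact spanM_le_kplus (l + 1) (subset_span (neg_act_mono hy hl))

lemma kplus_g0 (hK : IsKac V K η) {x : L.carrier} (hx : x ∈ L.g0) {m : K.carrier}
    (hm : m ∈ Kplus V K η) : K.act x m ∈ Kplus V K η := by
  apply act_mem_of_span (K.act x) _ hm
  intro s hs
  obtain ⟨l, hl⟩ := Set.mem_iUnion.mp hs
  exact spanM_le_kplus l (g0_act_mono hK hx hl)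

lemma span_top (hK : IsKac V K η) (hpure : ∀ v : V.carrier, η v ∈ K.ev ∨ η v ∈ K.od) :
    SpanM V K η 0 ⊔ Kplus V K η = ⊤ := by
  have hsetsplit : (⋃ l, Mono V K η l) = Mono V K η 0 ∪ ⋃ l, Mono V K η (l + 1) := by
    ext m
    simp only [Set.mem_iUnion, Set.mem_union]
    constructor
    · rintro ⟨l, hl⟩
      cases l with
      | zero => exact Or.inl hl
      | succ l' => exact Or.inr ⟨l', hl⟩
    · rintro (h | ⟨l, hl⟩)
      exacts [⟨0, h⟩, ⟨l + 1, hl⟩]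
  have hSP : span ℂ (⋃ l, Mono V K η l) = SpanM V K η 0 ⊔ Kplus V K η := by
    rw [hsetsplit, Submodule.span_union]
    rfl
  set SP := span ℂ (⋃ l, Mono V K η l) with hSPdef
  have hSPl : ∀ l, SpanM V K η l ≤ SP := fun l => span_mono (Set.subset_iUnion _ l)
  have hsub : K.IsSubmod SP := by
    constructor
    · intro x m hm
      obtain ⟨a, ha, b, hb, c, hc, rfl⟩ := exists_decomp L x
      have hsplit : K.act (a + b + c) m = K.act a m + K.act b m + K.act c m := by
        rw [map_add, map_add, LinearMap.add_apply, LinearMap.add_apply]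
      rw [hsplit]
      have hA : K.act a m ∈ SP := by
        apply act_mem_of_span (K.act a) _ hm
        intro s hs
        obtain ⟨l, hl⟩ := Set.mem_iUnion.mp hs
        exact hSPl l (g0_act_mono hK ha hl)
      have hB : K.act b m ∈ SP := by
        apply act_mem_of_span (K.act b) _ hm
        intro s hs
        obtain ⟨l, hl⟩ := Set.mem_iUnion.mp hs
        exact hSPl (l + 1) (subset_span (neg_act_mono hb hl))
      have hC : K.act c m ∈ SP := by
        apply act_mem_of_span (K.act c) _ hm
        intro s hs
        obtain ⟨l, hl⟩ := Set.mem_iUnion.mp hs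
        exact hSPl (l - 1) (pos_act_mono hK hc hl)
      exact add_mem (add_mem hA hB) hC
    · apply graded_span
      intro s hs
      obtain ⟨l, hl⟩ := Set.mem_iUnion.mp hs
      exact mono_homog hpure hl
  have hrange : LinearMap.range η ≤ SP := by
    rintro m ⟨v, rfl⟩
    exact subset_span (Set.mem_iUnion.mpr ⟨0, eta_mem_mono v⟩)
  have hgenle : K.gen (LinearMap.range η) ≤ SP := sInf_le ⟨hsub, hrange⟩
  rw [hK.generates] at hgenle
  rw [← hSP]
  exact eq_top_iff.mpr hgenle

lemma spanM_le_eigen {D : K.carrier →ₗ[ℂ] K.carrier}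
    (hD0 : ∀ v, D (η v) = 0)
    (hDact : ∀ (x : L.carrier) (m : K.carrier),
      D (K.act x m) = K.act x (D m) + K.act (Nmap L x) m) (l : ℕ) :
    SpanM V K η l ≤ Module.End.eigenspace D (-(l : ℂ)) := by
  apply span_le.mpr
  rintro s ⟨ys, v, hys, hlen, rfl⟩
  rw [← hlen]
  clear hlen
  induction ys with
  | nil =>
    rw [SetLike.mem_coe, Module.End.mem_eigenspace_iff, actList_nil, hD0 v]
    simp
  | cons y t ih =>
    have hy : y ∈ L.gneg := hys y List.mem_cons_self
    have ht : ∀ z ∈ t, z ∈ L.gneg := fun z hz => hys z (List.mem_cons_of_mem _ hz)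
    have ihmem := ih ht
    rw [SetLike.mem_coe, Module.End.mem_eigenspace_iff] at ihmem ⊢
    rw [actList_cons, hDact y _, ihmem, Nmap_neg hy, map_neg, LinearMap.neg_apply,
      map_smul]
    have : ((t.length : ℕ) : ℂ) + 1 = (((y :: t).length : ℕ) : ℂ) := by
      push_cast [List.length_cons]
      ring
    rw [← this]
    module

lemma disjoint_span0_kplus {D : K.carrier →ₗ[ℂ] K.carrier}
    (hD0 : ∀ v, D (η v) = 0)
    (hDact : ∀ (x : L.carrier) (m : K.carrier),
      D (K.act x m) = K.act x (D m) + K.act (Nmap L x) m) :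
    Disjoint (SpanM V K η 0) (Kplus V K η) := by
  have h1 : SpanM V K η 0 ≤ Module.End.eigenspace D 0 := by
    have h := spanM_le_eigen hD0 hDact 0
    simpa using h
  have h2 : Kplus V K η ≤ ⨆ (μ : ℂ) (_ : μ ≠ 0), Module.End.eigenspace D μ := by
    apply span_le.mpr
    intro s hs
    obtain ⟨l, hl⟩ := Set.mem_iUnion.mp hs
    have hμ : (-(((l + 1 : ℕ)) : ℂ)) ≠ 0 := by
      simp only [ne_eq, neg_eq_zero, Nat.cast_eq_zero]
      omega
    have hmem : s ∈ Module.End.eigenspace D (-((l + 1 : ℕ) : ℂ)) :=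
      spanM_le_eigen hD0 hDact (l + 1) (subset_span hl)
    exact (le_iSup₂ (f := fun (μ : ℂ) (_ : μ ≠ 0) => Module.End.eigenspace D μ)
      (-((l + 1 : ℕ) : ℂ)) hμ) hmem
  have hind := (Module.End.eigenspaces_iSupIndep D) 0
  exact hind.mono h1 h2

end Statement12

namespace Statement12

open Submodule

variable {L : GLSA}

/-! ### Further list-action helpers -/

def actListHom (M : SMod L) (l : List L.carrier) : M.carrier →ₗ[ℂ] M.carrier where
  toFun m := M.actList l m
  map_add' := actList_add M l
  map_smul' := actList_smul M l

lemma actList_sub (M : SMod L) (l : List L.carrier) (m m' : M.carrier) :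
    M.actList l (m - m') = M.actList l m - M.actList l m' := by
  have := map_sub (actListHom M l) m m'
  exact this

/-! ### The submodule `J*` -/

def Jstar (V : SMod0 L) (K : SMod L) (η : V.carrier →ₗ[ℂ] K.carrier) :
    Submodule ℂ K.carrier where
  carrier := {m | ∀ us : List L.carrier,
    (∀ u ∈ us, u ∈ L.gpos) → K.actList us m ∈ Kplus V K η}
  add_mem' := by
    intro a b ha hb us hus
    rw [actList_add]
    exact Submodule.add_mem _ (ha us hus) (hb us hus)
  zero_mem' := by
    intro us hus
    rw [actList_zero]
    exact Submodule.zero_mem _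
  smul_mem' := by
    intro c a ha us hus
    rw [actList_smul]
    exact Submodule.smul_mem _ c (ha us hus)

variable {V : SMod0 L} {K : SMod L} {η : V.carrier →ₗ[ℂ] K.carrier}

lemma mem_jstar {m : K.carrier} :
    m ∈ Jstar V K η ↔ ∀ us : List L.carrier,
      (∀ u ∈ us, u ∈ L.gpos) → K.actList us m ∈ Kplus V K η := Iff.rfl

lemma jstar_pos {u : L.carrier} (hu : u ∈ L.gpos) {m : K.carrier}
    (hm : m ∈ Jstar V K η) : K.act u m ∈ Jstar V K η := by
  rw [mem_jstar] at hm ⊢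
  intro us hus
  rw [← actList_concat]
  apply hm (us ++ [u])
  intro z hz
  rcases List.mem_append.mp hz with h | h
  · exact hus z h
  · rw [List.mem_singleton.mp h]; exact hu

lemma neg_act_K (hK : IsKac V K η) (hpure : ∀ v : V.carrier, η v ∈ K.ev ∨ η v ∈ K.od)
    {y : L.carrier} (hy : y ∈ L.gneg) (m : K.carrier) : K.act y m ∈ Kplus V K η := by
  have htop := span_top hK hpure
  have hm : m ∈ SpanM V K η 0 ⊔ Kplus V K η := by rw [htop]; exact Submodule.mem_top
  obtain ⟨s, hs, t, ht, hst⟩ := Submodule.mem_sup.mp hm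
  have h : K.act y m = K.act y s + K.act y t := by rw [← hst, map_add]
  rw [h]
  exact Submodule.add_mem _ (spanM_le_kplus 0 (neg_act_spanM hy hs)) (kplus_neg hy ht)

lemma jstar_master (hK : IsKac V K η) (hpure : ∀ v : V.carrier, η v ∈ K.ev ∨ η v ∈ K.od) :
    ∀ (r : ℕ) (us : List L.carrier), us.length ≤ r → (∀ u ∈ us, u ∈ L.gpos) →
      ∀ m ∈ Jstar V K η,
        (∀ x ∈ L.g0, K.actList us (K.act x m) ∈ Kplus V K η) ∧
        (∀ y ∈ L.gneg, K.actList us (K.act y m) ∈ Kplus V K η) := by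
  intro r
  induction r with
  | zero =>
    intro us hlen _ m hm
    have hnil : us = [] := List.length_eq_zero_iff.mp (Nat.le_zero.mp hlen)
    subst hnil
    constructor
    · intro x hx
      rw [actList_nil]
      exact kplus_g0 hK hx (mem_jstar.mp hm [] (by simp))
    · intro y hy
      rw [actList_nil]
      exact neg_act_K hK hpure hy m
  | succ r ih =>
    intro us hlen hus m hm
    rcases List.eq_nil_or_concat us with rfl | ⟨us', u, rfl⟩
    · constructor
      · intro x hx
        rw [actList_nil]
        exact kplus_g0 hK hx (mem_jstar.mp hm [] (by simp))
      · intro y hy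
        rw [actList_nil]
        exact neg_act_K hK hpure hy m
    · rw [List.concat_eq_append] at *
      have hu : u ∈ L.gpos := hus u (by simp)
      have hus' : ∀ z ∈ us', z ∈ L.gpos := fun z hz => hus z (by simp [hz])
      have hlen' : us'.length ≤ r := by
        rw [List.length_append] at hlen
        simp at hlen
        omega
      constructor
      · intro x hx
        rw [actList_concat]
        have hbr := K.act_br_e u x (Or.inr hx) m
        have heq : K.act u (K.act x m)
            = K.act (L.bracket u x) m + K.act x (K.act u m) := by rw [hbr]; abel
        rw [heq, actList_add]
        apply Submodule.add_mem
        · have hux : L.bracket u x ∈ L.gpos := by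
            have h := L.skew_e x hx u
            have h2 : L.bracket u x = -(L.bracket x u) := by rw [h, neg_neg]
            rw [h2]
            exact Submodule.neg_mem _ (L.br_0p x hx u hu)
          rw [← actList_concat]
          apply mem_jstar.mp hm (us' ++ [L.bracket u x])
          intro z hz
          rcases List.mem_append.mp hz with h | h
          · exact hus' z h
          · rw [List.mem_singleton.mp h]; exact hux
        · exact (ih us' hlen' hus' (K.act u m) (jstar_pos hu hm)).1 x hx
      · intro y hy
        rw [actList_concat]
        have hbr := K.act_br_oo u (pos_le_odd hu) y (neg_le_odd hy) m
        have heq : K.act u (K.act y m)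
            = K.act (L.bracket u y) m - K.act y (K.act u m) := by rw [hbr]; abel
        rw [heq, actList_sub]
        apply Submodule.sub_mem
        · exact (ih us' hlen' hus' m hm).1 (L.bracket u y) (L.br_pn u hu y hy)
        · exact (ih us' hlen' hus' (K.act u m) (jstar_pos hu hm)).2 y hy

lemma actList_pos_parity :
    ∀ (us : List L.carrier), (∀ u ∈ us, u ∈ L.gpos) →
    ∀ {e o : K.carrier}, e ∈ K.ev → o ∈ K.od →
    (K.actList us e ∈ K.ev ∧ K.actList us o ∈ K.od) ∨
    (K.actList us e ∈ K.od ∧ K.actList us o ∈ K.ev) := by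
  intro us
  induction us with
  | nil => intro _ e o he ho; exact Or.inl ⟨he, ho⟩
  | cons u t ih =>
    intro h e o he ho
    have hu : u ∈ L.odd := pos_le_odd (h u List.mem_cons_self)
    have ht : ∀ z ∈ t, z ∈ L.gpos := fun z hz => h z (List.mem_cons_of_mem _ hz)
    rw [actList_cons, actList_cons]
    rcases ih ht he ho with ⟨h1, h2⟩ | ⟨h1, h2⟩
    · exact Or.inr ⟨K.act_o_ev u hu _ h1, K.act_o_od u hu _ h2⟩
    · exact Or.inl ⟨K.act_o_od u hu _ h1, K.act_o_ev u hu _ h2⟩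

lemma jstar_decomp (hpure : ∀ v : V.carrier, η v ∈ K.ev ∨ η v ∈ K.od) :
    ∀ m ∈ Jstar V K η, ∃ e ∈ Jstar V K η ⊓ K.ev, ∃ o ∈ Jstar V K η ⊓ K.od, m = e + o := by
  intro m hm
  obtain ⟨e, he, o, ho, hmeo⟩ := grading_decomp K m
  have hein : e ∈ Jstar V K η := by
    rw [mem_jstar]
    intro us hus
    have hsum : K.actList us e + K.actList us o ∈ Kplus V K η := by
      rw [← actList_add, ← hmeo]
      exact mem_jstar.mp hm us hus
    obtain ⟨t1, ht1, t2, ht2, h12⟩ := kplus_graded hpure hsum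
    rcases actList_pos_parity us hus he ho with ⟨hA, hB⟩ | ⟨hA, hB⟩
    · have h3 : K.actList us e - t1 = t2 - K.actList us o := by
        rw [sub_eq_sub_iff_add_eq_add, h12, add_comm]
      have hz1 : K.actList us e - t1 ∈ K.ev := Submodule.sub_mem _ hA ht1.2
      have hz2 : K.actList us e - t1 ∈ K.od := by
        rw [h3]; exact Submodule.sub_mem _ ht2.2 hB
      have h0 := grading_eq_zero K hz1 hz2
      have h4 : K.actList us e = t1 := by rwa [sub_eq_zero] at h0
      rw [h4]; exact ht1.1
    · have h3 : K.actList us e - t2 = t1 - K.actList us o := by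
        rw [sub_eq_sub_iff_add_eq_add, h12]
      have hz1 : K.actList us e - t2 ∈ K.od := Submodule.sub_mem _ hA ht2.2
      have hz2 : K.actList us e - t2 ∈ K.ev := by
        rw [h3]; exact Submodule.sub_mem _ ht1.2 hB
      have h0 := grading_eq_zero K hz2 hz1
      have h4 : K.actList us e = t2 := by rwa [sub_eq_zero] at h0
      rw [h4]; exact ht2.1
  have hoin : o ∈ Jstar V K η := by
    have h : o = m - e := by rw [hmeo]; abel
    rw [h]
    exact Submodule.sub_mem _ hm hein
  exact ⟨e, ⟨hein, he⟩, o, ⟨hoin, ho⟩, hmeo⟩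

lemma jstar_isSubmod (hK : IsKac V K η)
    (hpure : ∀ v : V.carrier, η v ∈ K.ev ∨ η v ∈ K.od) :
    K.IsSubmod (Jstar V K η) := by
  constructor
  · intro x m hm
    obtain ⟨a, ha, b, hb, c, hc, rfl⟩ := exists_decomp L x
    have hsplit : K.act (a + b + c) m = K.act a m + K.act b m + K.act c m := by
      rw [map_add, map_add, LinearMap.add_apply, LinearMap.add_apply]
    rw [hsplit]
    refine Submodule.add_mem _ (Submodule.add_mem _ ?_ ?_) ?_
    · rw [mem_jstar]
      intro us hus
      exact (jstar_master hK hpure us.length us le_rfl hus m hm).1 a ha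
    · rw [mem_jstar]
      intro us hus
      exact (jstar_master hK hpure us.length us le_rfl hus m hm).2 b hb
    · exact jstar_pos hc hm
  · intro m hm
    obtain ⟨e, he, o, ho, hmeo⟩ := jstar_decomp hpure m hm
    exact Submodule.mem_sup.mpr ⟨e, he, o, ho, hmeo.symm⟩

end Statement12

namespace Statement12

open Submodule

variable {L : GLSA}
variable {V : SMod0 L} {K : SMod L} {η : V.carrier →ₗ[ℂ] K.carrier}

lemma ker_isSubmod {Q : SMod L} (π : SHom K Q) : K.IsSubmod (LinearMap.ker π.toLin) := by
  constructor
  · intro x m hm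
    rw [LinearMap.mem_ker, π.equivar x m, LinearMap.mem_ker.mp hm, map_zero]
  · intro m hm
    obtain ⟨e, he, o, ho, hmeo⟩ := grading_decomp K m
    have hsum : π.toLin e + π.toLin o = 0 := by
      rw [← map_add, ← hmeo]
      exact LinearMap.mem_ker.mp hm
    have hpe : π.toLin e = 0 := by
      apply grading_eq_zero Q (π.map_ev e he)
      have h : π.toLin e = -(π.toLin o) := eq_neg_of_add_eq_zero_left hsum
      rw [h]
      exact Submodule.neg_mem _ (π.map_od o ho)
    have hpo : π.toLin o = 0 := by
      have := hsum
      rw [hpe, zero_add] at this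
      exact this
    exact Submodule.mem_sup.mpr
      ⟨e, ⟨LinearMap.mem_ker.mpr hpe, he⟩, o, ⟨LinearMap.mem_ker.mpr hpo, ho⟩, hmeo.symm⟩

lemma exists_w (hK : IsKac V K η) {Q : SMod L} (hQ : Q.IsSimple) (π : SHom K Q)
    (hπ : Surjective π.toLin) : ∃ v₀, π.toLin (η v₀) ≠ 0 := by
  by_contra h
  push_neg at h
  have hrange : LinearMap.range η ≤ LinearMap.ker π.toLin := by
    rintro m ⟨v, rfl⟩
    exact LinearMap.mem_ker.mpr (h v)
  have hgen : K.gen (LinearMap.range η) ≤ LinearMap.ker π.toLin :=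
    sInf_le ⟨ker_isSubmod π, hrange⟩
  rw [hK.generates] at hgen
  apply hQ.1
  apply (Submodule.eq_bot_iff ⊤).mpr
  intro q _
  obtain ⟨m, rfl⟩ := hπ q
  exact LinearMap.mem_ker.mp (hgen Submodule.mem_top)

lemma core (L' : GLSA) [FiniteDimensional ℂ ↥L'.gneg]
    {V' : SMod0 L'} (hV : V'.IsSimple)
    {K' : SMod L'} {η' : V'.carrier →ₗ[ℂ] K'.carrier} (hK : IsKac V' K' η')
    {Q : SMod L'} (hQ : Q.IsSimple) (π : SHom K' Q) (hπ : Surjective π.toLin)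
    (KS KSo : Submodule ℂ K'.carrier) (QS QSo : Submodule ℂ Q.carrier)
    (hKsides : (KS = K'.ev ∧ KSo = K'.od) ∨ (KS = K'.od ∧ KSo = K'.ev))
    (hQsides : (QS = Q.ev ∧ QSo = Q.od) ∨ (QS = Q.od ∧ QSo = Q.ev))
    (hπS : ∀ m ∈ KS, π.toLin m ∈ QS) (hπSo : ∀ m ∈ KSo, π.toLin m ∈ QSo)
    (hη : ∀ v, η' v ∈ KS)
    (hVtop : V'.ev = ⊤ ∨ V'.od = ⊤)
    {a : Q.carrier} (ha : a ∈ QSo) (hinv : ∀ u ∈ L'.gpos, Q.act u a = 0) :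
    a = 0 := by
  classical
  obtain ⟨D, hD0, hDact⟩ := exists_D hK
  have hpure : ∀ v, η' v ∈ K'.ev ∨ η' v ∈ K'.od := by
    rcases hKsides with ⟨h1, _⟩ | ⟨h1, _⟩
    · exact fun v => Or.inl (h1 ▸ hη v)
    · exact fun v => Or.inr (h1 ▸ hη v)
  have htop := span_top hK hpure
  have hdisj := disjoint_span0_kplus (V := V') (K := K') (η := η') hD0 hDact
  have hdK : ∀ z, z ∈ KS → z ∈ KSo → z = 0 := by
    rcases hKsides with ⟨h1, h2⟩ | ⟨h1, h2⟩ <;> subst h1 <;> subst h2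
    · exact fun z hz1 hz2 => grading_eq_zero K' hz1 hz2
    · exact fun z hz1 hz2 => grading_eq_zero K' hz2 hz1
  have hdQ : ∀ z, z ∈ QS → z ∈ QSo → z = 0 := by
    rcases hQsides with ⟨h1, h2⟩ | ⟨h1, h2⟩ <;> subst h1 <;> subst h2
    · exact fun z hz1 hz2 => grading_eq_zero Q hz1 hz2
    · exact fun z hz1 hz2 => grading_eq_zero Q hz2 hz1
  have hdisj' : ∀ z, z ∈ LinearMap.range η' → z ∈ Kplus V' K' η' → z = 0 := by
    intro z h1 h2
    refine Submodule.disjoint_def.mp hdisj z ?_ h2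
    rw [span0_eq]
    exact h1
  -- opposite side of `K` sits inside `Kplus`
  have hKSo_le : ∀ m ∈ KSo, m ∈ Kplus V' K' η' := by
    intro m hm
    have hmem : m ∈ SpanM V' K' η' 0 ⊔ Kplus V' K' η' := by
      rw [htop]; exact Submodule.mem_top
    obtain ⟨s, hs, t, htp, hst⟩ := Submodule.mem_sup.mp hmem
    rw [span0_eq] at hs
    obtain ⟨v, rfl⟩ := hs
    obtain ⟨t1, ht1, t2, ht2, ht12⟩ := kplus_graded hpure htp
    rcases hKsides with ⟨h1, h2⟩ | ⟨h1, h2⟩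
    · have hx : m - t2 = η' v + t1 := by rw [← hst, ht12]; abel
      have hmem1 : m - t2 ∈ KSo := Submodule.sub_mem _ hm (h2 ▸ ht2.2)
      have hmem2 : η' v + t1 ∈ KS := Submodule.add_mem _ (hη v) (h1 ▸ ht1.2)
      have h0 : m - t2 = 0 := hdK _ (hx ▸ hmem2) hmem1
      have hmt : m = t2 := by rwa [sub_eq_zero] at h0
      rw [hmt]; exact ht2.1
    · have hx : m - t1 = η' v + t2 := by rw [← hst, ht12]; abel
      have hmem1 : m - t1 ∈ KSo := Submodule.sub_mem _ hm (h2 ▸ ht1.2)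
      have hmem2 : η' v + t2 ∈ KS := Submodule.add_mem _ (hη v) (h1 ▸ ht2.2)
      have h0 : m - t1 = 0 := hdK _ (hx ▸ hmem2) hmem1
      have hmt : m = t1 := by rwa [sub_eq_zero] at h0
      rw [hmt]; exact ht1.1
  set J := LinearMap.ker π.toLin with hJdef
  have hJact : ∀ (x : L'.carrier), ∀ m ∈ J, K'.act x m ∈ J := (ker_isSubmod π).1
  have hJactList : ∀ (us : List L'.carrier), ∀ m ∈ J, K'.actList us m ∈ J := by
    intro us
    induction us with
    | nil => intro m hm; exact hm
    | cons x t ih =>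
      intro m hm
      rw [actList_cons]
      exact hJact x _ (ih m hm)
  obtain ⟨v₀, hv₀⟩ := exists_w hK hQ π hπ
  -- J is contained in Kplus
  have hJle : ∀ j ∈ J, j ∈ Kplus V' K' η' := by
    set VJ : Submodule ℂ V'.carrier := Submodule.comap η' (J ⊔ Kplus V' K' η') with hVJdef
    have hVJsub : V'.IsSubmod VJ := by
      constructor
      · intro x v hv
        have h1 : η' (V'.act x v) = K'.act ↑x (η' v) := hK.equivar x v
        have hv' : η' v ∈ J ⊔ Kplus V' K' η' := hv
        obtain ⟨j, hj, t, htp, hjt⟩ := Submodule.mem_sup.mp hv'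
        have h2 : K'.act ↑x (η' v) = K'.act ↑x j + K'.act ↑x t := by
          rw [← hjt, map_add]
        show η' (V'.act x v) ∈ J ⊔ Kplus V' K' η'
        rw [h1, h2]
        exact Submodule.add_mem _ (Submodule.mem_sup_left (hJact ↑x j hj))
          (Submodule.mem_sup_right (kplus_g0 hK x.2 htp))
      · rcases hVtop with h | h
        · intro v hv
          apply Submodule.mem_sup_left
          exact ⟨hv, by rw [h]; exact Submodule.mem_top⟩
        · intro v hv
          apply Submodule.mem_sup_right
          exact ⟨hv, by rw [h]; exact Submodule.mem_top⟩
    rcases hV.2 VJ hVJsub with hbot | htop2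
    · intro j hj
      have hmem : j ∈ SpanM V' K' η' 0 ⊔ Kplus V' K' η' := by
        rw [htop]; exact Submodule.mem_top
      obtain ⟨s, hs, t, htp, hst⟩ := Submodule.mem_sup.mp hmem
      rw [span0_eq] at hs
      obtain ⟨v, rfl⟩ := hs
      have hv : v ∈ VJ := by
        show η' v ∈ J ⊔ Kplus V' K' η'
        have h : η' v = j - t := by rw [← hst]; abel
        rw [h]
        exact Submodule.sub_mem _ (Submodule.mem_sup_left hj) (Submodule.mem_sup_right htp)
      rw [hbot] at hv
      have hv0 : v = 0 := hv
      subst hv0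
      rw [map_zero, zero_add] at hst
      rw [← hst]
      exact htp
    · exfalso
      have hC : ∀ (jj : ℕ) (l : ℕ), (finrank ℂ ↥L'.gneg) + 1 ≤ l + jj →
          SpanM V' K' η' l ≤ J := by
        intro jj
        induction jj with
        | zero =>
          intro l hl
          apply span_le.mpr
          rintro s ⟨ys, v, hys, hlen, rfl⟩
          have hvan : K'.actList ys (η' v) = 0 := van K' ys hys (by omega) (η' v)
          rw [SetLike.mem_coe, hvan]
          exact Submodule.zero_mem _
        | succ jj ih =>
          intro l hl
          by_cases hcase : finrank ℂ ↥L'.gneg + 1 ≤ l + jj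
          · exact ih l hcase
          · apply span_le.mpr
            rintro s ⟨ys, v, hys, hlen, rfl⟩
            have hv : v ∈ VJ := by rw [htop2]; exact Submodule.mem_top
            obtain ⟨j, hj, t, htp, hjt⟩ :=
              Submodule.mem_sup.mp (hv : η' v ∈ J ⊔ Kplus V' K' η')
            have hsplit : K'.actList ys (η' v) = K'.actList ys j + K'.actList ys t := by
              rw [← hjt, actList_add]
            rw [SetLike.mem_coe, hsplit]
            apply Submodule.add_mem
            · exact hJactList ys j hj
            · have hgen : ∀ t' ∈ Kplus V' K' η', K'.actList ys t' ∈ J := by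
                intro t' ht'
                have happ := act_mem_of_span (actListHom K' ys)
                  (T := J) (S := ⋃ l', Mono V' K' η' (l' + 1)) ?_ ht'
                · exact happ
                · intro s' hs'
                  obtain ⟨l', hl'⟩ := Set.mem_iUnion.mp hs'
                  obtain ⟨zs, w, hzs, hzlen, rfl⟩ := hl'
                  show K'.actList ys (K'.actList zs (η' w)) ∈ J
                  rw [← actList_append]
                  have hmem2 : K'.actList (ys ++ zs) (η' w) ∈ Mono V' K' η' (ys ++ zs).length := by
                    refine ⟨ys ++ zs, w, ?_, rfl, rfl⟩
                    intro z hz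
                    rcases List.mem_append.mp hz with h | h
                    · exact hys z h
                    · exact hzs z h
                  have hlen2 : finrank ℂ ↥L'.gneg + 1 ≤ (ys ++ zs).length + jj := by
                    rw [List.length_append, hlen, hzlen]
                    omega
                  exact ih (ys ++ zs).length hlen2 (subset_span hmem2)
              exact hgen t htp
      have hJtop : ∀ m : K'.carrier, m ∈ J := by
        intro m
        have hm : m ∈ SpanM V' K' η' 0 ⊔ Kplus V' K' η' := by
          rw [htop]; exact Submodule.mem_top
        obtain ⟨s, hs, t, htp, hst⟩ := Submodule.mem_sup.mp hm
        have h1 : s ∈ J := hC (finrank ℂ ↥L'.gneg + 1) 0 (by omega) hs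
        have h2 : t ∈ J := by
          have hKp : Kplus V' K' η' ≤ J := by
            apply span_le.mpr
            intro z hz
            obtain ⟨l', hl'⟩ := Set.mem_iUnion.mp hz
            exact hC (finrank ℂ ↥L'.gneg + 1) (l' + 1) (by omega) (subset_span hl')
          exact hKp htp
        rw [← hst]
        exact Submodule.add_mem _ h1 h2
      exact hv₀ (LinearMap.mem_ker.mp (hJtop (η' v₀)))
  -- produce the homogeneous lift of `a`
  obtain ⟨m', hm'⟩ := hπ a
  obtain ⟨e, he, o, ho, hmeo⟩ := grading_decomp K' m'
  have hdecK : ∃ u0 ∈ KS, ∃ w0 ∈ KSo, m' = u0 + w0 := by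
    rcases hKsides with ⟨h1, h2⟩ | ⟨h1, h2⟩
    · exact ⟨e, h1 ▸ he, o, h2 ▸ ho, hmeo⟩
    · exact ⟨o, h1 ▸ ho, e, h2 ▸ he, by rw [hmeo]; abel⟩
  obtain ⟨u0, hu0, w0, hw0, hm'uw⟩ := hdecK
  have hπu : π.toLin u0 ∈ QS := hπS _ hu0
  have hπw : π.toLin w0 ∈ QSo := hπSo _ hw0
  have hsum : π.toLin u0 + π.toLin w0 = a := by rw [← map_add, ← hm'uw, hm']
  have hπu0 : π.toLin u0 = 0 := by
    apply hdQ _ hπu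
    have h : π.toLin u0 = a - π.toLin w0 := by rw [← hsum]; abel
    rw [h]
    exact Submodule.sub_mem _ ha hπw
  have hπm : π.toLin w0 = a := by rw [← hsum, hπu0, zero_add]
  -- the lift lies in J*
  have hmJ : w0 ∈ Jstar V' K' η' := by
    rw [mem_jstar]
    intro us hus
    rcases List.eq_nil_or_concat us with rfl | ⟨us', u, rfl⟩
    · rw [actList_nil]
      exact hKSo_le w0 hw0
    · rw [List.concat_eq_append]
      have hu : u ∈ L'.gpos := hus u (by simp [List.concat_eq_append])
      have hum : K'.act u w0 ∈ J := by
        rw [hJdef, LinearMap.mem_ker, π.equivar u w0, hπm]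
        exact hinv u hu
      rw [actList_concat]
      exact hJle _ (hJactList us' _ hum)
  -- the image of J* is a subsupermodule of Q
  set N := Submodule.map π.toLin (Jstar V' K' η') with hNdef
  have hNsub : Q.IsSubmod N := by
    constructor
    · rintro x q ⟨mm, hmm, rfl⟩
      exact ⟨K'.act x mm, (jstar_isSubmod hK hpure).1 x mm hmm, π.equivar x mm⟩
    · rintro q ⟨mm, hmm, rfl⟩
      obtain ⟨e', he', o', ho', hmeo'⟩ := jstar_decomp hpure mm hmm
      have h : π.toLin mm = π.toLin e' + π.toLin o' := by rw [← map_add, ← hmeo']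
      rw [h]
      apply Submodule.add_mem
      · exact Submodule.mem_sup_left ⟨⟨e', he'.1, rfl⟩, π.map_ev e' he'.2⟩
      · exact Submodule.mem_sup_right ⟨⟨o', ho'.1, rfl⟩, π.map_od o' ho'.2⟩
  rcases hQ.2 N hNsub with hbot | htopN
  · have haN : a ∈ N := ⟨w0, hmJ, hπm⟩
    rw [hbot] at haN
    exact haN
  · exfalso
    have hmem : π.toLin (η' v₀) ∈ N := by rw [htopN]; exact Submodule.mem_top
    obtain ⟨m1, hm1, hm1e⟩ := hmem
    have hj : η' v₀ - m1 ∈ J := by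
      rw [hJdef, LinearMap.mem_ker, map_sub, hm1e, sub_self]
    have h1 : m1 ∈ Kplus V' K' η' := by
      have := mem_jstar.mp hm1 [] (by simp)
      rwa [actList_nil] at this
    have h2 : η' v₀ - m1 ∈ Kplus V' K' η' := hJle _ hj
    have h3 : η' v₀ ∈ Kplus V' K' η' := by
      have h : η' v₀ = m1 + (η' v₀ - m1) := by abel
      rw [h]
      exact Submodule.add_mem _ h1 h2
    have h0 : η' v₀ = 0 := hdisj' _ ⟨v₀, rfl⟩ h3
    exact hv₀ (by rw [h0, map_zero])

end Statement12

/-- For every simple `𝔤₀`-supermodule `V`, the simple `𝔤`-supermodule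
`L(V)` (the simple top of the Kac module `K(V)`) is not isomorphic to its parity shift
`Π L(V)`. -/
theorem statement_12 (L : GLSA)
    [FiniteDimensional ℂ ↥L.gneg] [FiniteDimensional ℂ ↥L.gpos]
    (V : SMod0 L) (hV : V.IsSimple)
    (K : SMod L) (η : V.carrier →ₗ[ℂ] K.carrier) (hK : IsKac V K η)
    (Q : SMod L) (hQ : Q.IsSimple) (π : SHom K Q) (hπ : Surjective π.toLin) :
    ¬ SIso Q Q.pshift := by
  rintro ⟨f, hf⟩
  have hVevsub : V.IsSubmod V.ev := by
    constructor
    · exact fun x v hv => V.act_ev x v hv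
    · intro v hv
      exact Submodule.mem_sup_left ⟨hv, hv⟩
  obtain ⟨v₀, hv₀⟩ := Statement12.exists_w hK hQ π hπ
  set w := π.toLin (η v₀) with hwdef
  rcases hV.2 V.ev hVevsub with hev | hev
  · -- `V` is purely odd
    have hodtop : V.od = ⊤ := by
      have hc := codisjoint_iff.mp V.grading.codisjoint
      rw [hev, bot_sup_eq] at hc
      exact hc
    have hη : ∀ v, η v ∈ K.od := fun v =>
      hK.map_od v (by rw [hodtop]; exact Submodule.mem_top)
    have hwQ : w ∈ Q.od := π.map_od _ (hη v₀)
    have haQ : f.toLin w ∈ Q.ev := f.map_od w hwQ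
    have hainv : ∀ u ∈ L.gpos, Q.act u (f.toLin w) = 0 := by
      intro u hu
      have h1 : Q.act u w = 0 := by
        rw [hwdef, ← π.equivar u (η v₀), hK.pos_zero u hu v₀, map_zero]
      have h3 : Q.act u (f.toLin w) = f.toLin (Q.act u w) := (f.equivar u w).symm
      rw [h3, h1, map_zero]; rfl
    have ha0 := Statement12.core L hV hK hQ π hπ K.od K.ev Q.od Q.ev
      (Or.inr ⟨rfl, rfl⟩) (Or.inr ⟨rfl, rfl⟩) π.map_od π.map_ev hη (Or.inr hodtop)
      haQ hainv
    have hw0 : w = 0 := by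
      apply hf.1
      rw [ha0, map_zero]; rfl
    exact hv₀ hw0
  · -- `V` is purely even
    have hη : ∀ v, η v ∈ K.ev := fun v =>
      hK.map_ev v (by rw [hev]; exact Submodule.mem_top)
    have hwQ : w ∈ Q.ev := π.map_ev _ (hη v₀)
    have haQ : f.toLin w ∈ Q.od := f.map_ev w hwQ
    have hainv : ∀ u ∈ L.gpos, Q.act u (f.toLin w) = 0 := by
      intro u hu
      have h1 : Q.act u w = 0 := by
        rw [hwdef, ← π.equivar u (η v₀), hK.pos_zero u hu v₀, map_zero]
      have h3 : Q.act u (f.toLin w) = f.toLin (Q.act u w) := (f.equivar u w).symm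
      rw [h3, h1, map_zero]; rfl
    have ha0 := Statement12.core L hV hK hQ π hπ K.ev K.od Q.ev Q.od
      (Or.inl ⟨rfl, rfl⟩) (Or.inl ⟨rfl, rfl⟩) π.map_ev π.map_od hη (Or.inl hev)
      haQ hainv
    have hw0 : w = 0 := by
      apply hf.1
      rw [ha0, map_zero]; rfl
    exact hv₀ hw0
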